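/- Let d ≥ 1 and let A be a symmetric positive-definite d × d real matrix. Then ∫_{S^{d−1}} ⟨AΩ, Ω⟩^{−d/2} dσ(Ω) = (det A)^{−1/2} · σ(S^{d−1}), where ⟨·,·⟩ is the standard inner product on ℝ^d. -/

import Mathlib

open MeasureTheory Finset

noncomputable section

/-- The natural surface measure on the unit sphere `S^{d-1} ⊂ ℝ^d`. -/
def sphereMeasure (d : ℕ) :
    Measure (Metric.sphere (0 : EuclideanSpace ℝ (Fin d)) 1) :=
  (volume : Measure (EuclideanSpace ℝ (Fin d))).toSphere

section Aux

open Set Metric Real Matrix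

private lemma integral_volumeIoiPow' (n : ℕ) (f : ℝ → ℝ) :
    ∫ x : Set.Ioi (0:ℝ), f x ∂(MeasureTheory.Measure.volumeIoiPow n) =
      ∫ y in Set.Ioi (0:ℝ), y ^ n * f y := by
  simp only [Measure.volumeIoiPow, ENNReal.ofReal]
  rw [integral_withDensity_eq_integral_smul
      ((measurable_subtype_coe.pow_const _).real_toNNReal),
    integral_subtype_comap measurableSet_Ioi fun a ↦ Real.toNNReal (a ^ n) • f a,
    setIntegral_congr_fun measurableSet_Ioi fun x hx ↦ ?_]
  rw [NNReal.smul_def, Real.coe_toNNReal _ (pow_nonneg hx.out.le _), smul_eq_mul]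

private lemma polar_aux {d : ℕ} (hd : 1 ≤ d) (Q : EuclideanSpace ℝ (Fin d) → ℝ)
    (hQpos : ∀ x : EuclideanSpace ℝ (Fin d), x ≠ 0 → 0 < Q x)
    (hQhom : ∀ (c : ℝ) (x : EuclideanSpace ℝ (Fin d)), Q (c • x) = c ^ 2 * Q x)
    (hint : Integrable (fun x : EuclideanSpace ℝ (Fin d) => Real.exp (-Q x))) :
    ∫ x : EuclideanSpace ℝ (Fin d), Real.exp (-Q x) =
      (∫ Ω : Metric.sphere (0 : EuclideanSpace ℝ (Fin d)) 1,
          Q Ω ^ (-(d : ℝ) / 2)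
        ∂(volume : Measure (EuclideanSpace ℝ (Fin d))).toSphere) *
      ((1 / 2) * Real.Gamma (d / 2)) := by
  let E := EuclideanSpace ℝ (Fin d)
  haveI : Nontrivial E := by
    refine Module.nontrivial_of_finrank_pos (R := ℝ) ?_
    rw [finrank_euclideanSpace_fin]
    omega
  let μ : Measure E := volume
  have hdim : Module.finrank ℝ E = d := finrank_euclideanSpace_fin
  have hcomp : ∀ x : ({0}ᶜ : Set E),
      Real.exp (-((((homeomorphUnitSphereProd E) x).2 : ℝ) ^ 2 *
        Q (((homeomorphUnitSphereProd E) x).1 : E))) = Real.exp (-Q x) := by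
    intro x
    have hx : (x : E) ≠ 0 := x.2
    have hn : ‖(x : E)‖ ≠ 0 := norm_ne_zero_iff.mpr hx
    simp only [homeomorphUnitSphereProd_apply_fst_coe, homeomorphUnitSphereProd_apply_snd_coe]
    rw [hQhom]
    congr 1
    field_simp
  have hintprod : Integrable
      (fun p : Metric.sphere (0 : E) 1 × Set.Ioi (0:ℝ) =>
        Real.exp (-((p.2 : ℝ) ^ 2 * Q (p.1 : E))))
      (μ.toSphere.prod (.volumeIoiPow (Module.finrank ℝ E - 1))) := by
    rw [← μ.measurePreserving_homeomorphUnitSphereProd.integrable_comp_emb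
      (Homeomorph.measurableEmbedding _)]
    have : ((fun p : Metric.sphere (0 : E) 1 × Set.Ioi (0:ℝ) =>
        Real.exp (-((p.2 : ℝ) ^ 2 * Q (p.1 : E)))) ∘ (homeomorphUnitSphereProd E)) =
        fun x : ({0}ᶜ : Set E) => Real.exp (-Q x) := funext fun x => hcomp x
    rw [this]
    have h1 : Integrable (fun x : E => Real.exp (-Q x)) (μ.restrict {0}ᶜ) :=
      hint.restrict
    rw [← map_comap_subtype_coe (measurableSet_singleton (0:E)).compl] at h1
    exact (MeasurableEmbedding.subtype_coe
      (measurableSet_singleton (0:E)).compl).integrable_map_iff.mp h1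
  calc ∫ x : E, Real.exp (-Q x) ∂μ
      = ∫ x : ({0}ᶜ : Set E), Real.exp (-Q x) ∂(μ.comap (↑)) := by
        rw [integral_subtype_comap (measurableSet_singleton _).compl fun x => Real.exp (-Q x),
          MeasureTheory.restrict_compl_singleton]
    _ = ∫ p : Metric.sphere (0 : E) 1 × Set.Ioi (0:ℝ),
          Real.exp (-((p.2 : ℝ) ^ 2 * Q (p.1 : E)))
          ∂(μ.toSphere.prod (.volumeIoiPow (Module.finrank ℝ E - 1))) := by
        rw [← μ.measurePreserving_homeomorphUnitSphereProd.integral_comp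
          (Homeomorph.measurableEmbedding _)
          (fun p : Metric.sphere (0 : E) 1 × Set.Ioi (0:ℝ) =>
            Real.exp (-((p.2 : ℝ) ^ 2 * Q (p.1 : E))))]
        exact integral_congr_ae (.of_forall fun x => (hcomp x).symm)
    _ = ∫ Ω : Metric.sphere (0 : E) 1,
          (∫ r : Set.Ioi (0:ℝ), Real.exp (-((r : ℝ) ^ 2 * Q (Ω : E)))
            ∂(Measure.volumeIoiPow (Module.finrank ℝ E - 1))) ∂μ.toSphere :=
        integral_prod _ hintprod
    _ = ∫ Ω : Metric.sphere (0 : E) 1,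
          Q (Ω : E) ^ (-(d : ℝ) / 2) * ((1 / 2) * Real.Gamma (d / 2)) ∂μ.toSphere := by
        refine integral_congr_ae (.of_forall fun Ω => ?_)
        dsimp only
        have hΩ : (Ω : E) ≠ 0 := ne_of_mem_sphere Ω.2 one_ne_zero
        have hq : 0 < Q Ω := hQpos _ hΩ
        rw [show (∫ r : Set.Ioi (0:ℝ), Real.exp (-((r : ℝ) ^ 2 * Q (Ω : E)))
              ∂(Measure.volumeIoiPow (Module.finrank ℝ E - 1))) =
            ∫ y in Set.Ioi (0:ℝ), y ^ (Module.finrank ℝ E - 1) *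
              Real.exp (-((y:ℝ) ^ 2 * Q (Ω : E))) from
          integral_volumeIoiPow' (Module.finrank ℝ E - 1)
            (fun y => Real.exp (-(y ^ 2 * Q (Ω : E))))]
        have h2 : ∫ y in Set.Ioi (0:ℝ), y ^ (Module.finrank ℝ E - 1) *
              Real.exp (-((y : ℝ) ^ 2 * Q (Ω : E))) =
            ∫ y in Set.Ioi (0:ℝ), y ^ ((d : ℝ) - 1) *
              Real.exp (-(Q (Ω : E)) * y ^ (2:ℝ)) := by
          refine setIntegral_congr_fun measurableSet_Ioi fun y hy => ?_
          rw [hdim]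
          have hy0 : (0:ℝ) ≤ y := le_of_lt hy
          rw [show ((d : ℝ) - 1) = ((d - 1 : ℕ) : ℝ) by
              rw [Nat.cast_sub hd]; norm_num,
            Real.rpow_natCast, show (2:ℝ) = ((2:ℕ):ℝ) by norm_num, Real.rpow_natCast]
          ring_nf
        rw [h2, integral_rpow_mul_exp_neg_mul_rpow two_pos (by
            have : (1:ℝ) ≤ (d:ℝ) := by exact_mod_cast hd
            linarith) hq]
        rw [show -((d:ℝ) - 1 + 1) / 2 = -(d:ℝ)/2 by ring,
          show ((d:ℝ) - 1 + 1) / 2 = (d:ℝ)/2 by ring, mul_assoc]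
    _ = (∫ Ω : Metric.sphere (0 : E) 1, Q (Ω : E) ^ (-(d : ℝ) / 2) ∂μ.toSphere) *
          ((1 / 2) * Real.Gamma (d / 2)) := integral_mul_const _ _

private lemma quad_eq_norm_sq {d : ℕ} (A B : Matrix (Fin d) (Fin d) ℝ) (hBB : B * B = A)
    (hBT : Bᵀ = B) (x : EuclideanSpace ℝ (Fin d)) :
    ∑ i, (∑ k, A i k * x k) * x i = ‖Matrix.toEuclideanLin B x‖ ^ 2 := by
  have hnorm : ‖Matrix.toEuclideanLin B x‖ ^ 2 = ∑ i, (B.mulVec x i) ^ 2 := by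
    rw [EuclideanSpace.norm_eq, Real.sq_sqrt (by positivity)]
    refine Finset.sum_congr rfl fun i _ => ?_
    rw [show (Matrix.toEuclideanLin B x) i = B.mulVec x i from rfl, Real.norm_eq_abs, sq_abs]
  rw [hnorm]
  have hL : ∑ i, (∑ k, A i k * x k) * x i = (A.mulVec x) ⬝ᵥ (x : Fin d → ℝ) := rfl
  have hR : ∑ i, (B.mulVec x i) ^ 2 = (B.mulVec x) ⬝ᵥ (B.mulVec x) := by
    simp [dotProduct, sq]
  rw [hL, hR, ← hBB, ← Matrix.mulVec_mulVec, dotProduct_comm,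
    dotProduct_mulVec, ← Matrix.mulVec_transpose, hBT]

private lemma integrable_exp_neg_norm_sq (d : ℕ) :
    Integrable (fun y : EuclideanSpace ℝ (Fin d) => Real.exp (-‖y‖ ^ 2)) := by
  have h := (GaussianFourier.integrable_cexp_neg_mul_sq_norm_add
    (V := EuclideanSpace ℝ (Fin d)) (b := 1) (by norm_num) 0 0).norm
  refine h.congr (Filter.Eventually.of_forall fun v => ?_)
  dsimp only
  rw [Complex.norm_exp]
  congr 1
  simp [← Complex.ofReal_pow]

open scoped MatrixOrder in
private def matSqrt {d : ℕ} (A : Matrix (Fin d) (Fin d) ℝ) : Matrix (Fin d) (Fin d) ℝ :=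
  CFC.sqrt A

open scoped MatrixOrder in
private lemma matSqrt_posSemidef {d : ℕ} {A : Matrix (Fin d) (Fin d) ℝ} (_h : A.PosSemidef) :
    (matSqrt A).PosSemidef :=
  (CFC.sqrt_nonneg A).posSemidef

open scoped MatrixOrder in
private lemma matSqrt_mul_self {d : ℕ} {A : Matrix (Fin d) (Fin d) ℝ} (h : A.PosSemidef) :
    matSqrt A * matSqrt A = A :=
  CFC.sqrt_mul_sqrt_self A h.nonneg

end Aux

/-- For a symmetric positive-definite matrix `A`,
`∫_{S^{d−1}} ⟨AΩ, Ω⟩^{−d/2} dσ(Ω) = (det A)^{−1/2} σ(S^{d−1})`. -/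
theorem integral_sphere_quadratic_form_rpow
    {d : ℕ} (hd : 1 ≤ d) (A : Matrix (Fin d) (Fin d) ℝ)
    (hsymm : A.IsSymm) (hpos : A.PosDef) :
    (∫ Ω : Metric.sphere (0 : EuclideanSpace ℝ (Fin d)) 1,
        (∑ i, (∑ k, A i k * (Ω : EuclideanSpace ℝ (Fin d)) k) *
            (Ω : EuclideanSpace ℝ (Fin d)) i) ^ (-(d : ℝ) / 2)
        ∂(sphereMeasure d)) =
      A.det ^ (-(1 : ℝ) / 2) * ((sphereMeasure d) Set.univ).toReal := by
  classical
  set E := EuclideanSpace ℝ (Fin d) with hE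
  set σ : Measure (Metric.sphere (0 : E) 1) := sphereMeasure d with hσ
  set Q : E → ℝ := fun x => ∑ i, (∑ k, A i k * x k) * x i with hQdef
  -- the square root of `A`
  set B : Matrix (Fin d) (Fin d) ℝ := matSqrt A with hBdef
  have hBsd : B.PosSemidef := matSqrt_posSemidef hpos.posSemidef
  have hBB : B * B = A := matSqrt_mul_self hpos.posSemidef
  have hBT : B.transpose = B := by
    rw [← Matrix.conjTranspose_eq_transpose_of_trivial]; exact hBsd.1
  have hdetB2 : B.det ^ 2 = A.det := by rw [← hBB, Matrix.det_mul, sq]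
  have hAdetpos : 0 < A.det := hpos.det_pos
  have hBdetnn : 0 ≤ B.det := by
    rw [hBsd.1.det_eq_prod_eigenvalues]
    refine Finset.prod_nonneg fun i _ => ?_
    simpa using hBsd.eigenvalues_nonneg i
  have hBdetpos : 0 < B.det := by
    rcases hBdetnn.lt_or_eq with h | h
    · exact h
    · exfalso; rw [← h] at hdetB2; simp at hdetB2; exact hAdetpos.ne' hdetB2.symm
  -- the associated linear map and equivalences
  set L : E →ₗ[ℝ] E := Matrix.toEuclideanLin B with hLdef
  have hdetL : LinearMap.det L = B.det := by
    rw [hLdef, Matrix.toEuclideanLin_eq_toLin, LinearMap.det_toLin]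
  have hdetLne : LinearMap.det L ≠ 0 := by rw [hdetL]; exact hBdetpos.ne'
  set eL : E ≃ₗ[ℝ] E := LinearMap.equivOfDetNeZero L hdetLne with heLdef
  have heL : ∀ x : E, eL x = L x := fun x => by
    rw [heLdef, LinearMap.equivOfDetNeZero]
    exact DFunLike.congr_fun (LinearEquiv.coe_ofIsUnitDet _) x
  set ceL : E ≃L[ℝ] E := eL.toContinuousLinearEquiv with hceLdef
  have hceL : ∀ x : E, ceL x = L x := fun x => heL x
  -- `Q x = ‖L x‖ ^ 2`
  have hQL : ∀ x : E, Q x = ‖L x‖ ^ 2 := fun x => quad_eq_norm_sq A B hBB hBT x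
  have hQpos : ∀ x : E, x ≠ 0 → 0 < Q x := by
    intro x hx
    rw [hQL]
    have hLx : L x ≠ 0 := by
      rw [← heL]
      exact fun h => hx (by simpa using eL.map_eq_zero_iff.mp h)
    exact pow_pos (norm_pos_iff.mpr hLx) 2
  have hQhom : ∀ (c : ℝ) (x : E), Q (c • x) = c ^ 2 * Q x := by
    intro c x
    rw [hQL, hQL, show L (c • x) = c • L x from L.map_smul c x, norm_smul, mul_pow,
      Real.norm_eq_abs, sq_abs]
  -- change of variables
  have hgi : Integrable (fun y : E => Real.exp (-‖y‖ ^ 2)) := integrable_exp_neg_norm_sq d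
  have hmapeq : Measure.map (⇑ceL) (volume : Measure E) =
      ENNReal.ofReal |B.det⁻¹| • (volume : Measure E) := by
    have h := Measure.map_linearMap_addHaar_eq_smul_addHaar (μ := (volume : Measure E)) hdetLne
    rw [show (⇑ceL) = (⇑L) from funext hceL, h, hdetL]
  have hc0 : (ENNReal.ofReal |B.det⁻¹|) ≠ 0 := by
    simp only [ne_eq, ENNReal.ofReal_eq_zero, not_le, abs_pos]
    positivity
  have hctop : (ENNReal.ofReal |B.det⁻¹|) ≠ ⊤ := ENNReal.ofReal_ne_top
  have hemb : MeasurableEmbedding (⇑ceL) := ceL.toHomeomorph.measurableEmbedding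
  have hmeq : Integrable (fun y : E => Real.exp (-‖y‖ ^ 2)) (Measure.map (⇑ceL) volume) := by
    rw [hmapeq]
    exact (integrable_smul_measure hc0 hctop).mpr hgi
  have hQint : Integrable (fun x : E => Real.exp (-Q x)) := by
    have hfeq : (fun x : E => Real.exp (-Q x)) =
        (fun y : E => Real.exp (-‖y‖ ^ 2)) ∘ (⇑ceL) := by
      funext x
      simp only [Function.comp_apply, hceL, hQL]
    rw [hfeq]
    exact hemb.integrable_map_iff.mp hmeq
  have hCoV : ∫ x : E, Real.exp (-Q x) =
      B.det⁻¹ * ∫ y : E, Real.exp (-‖y‖ ^ 2) := by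
    calc ∫ x : E, Real.exp (-Q x)
        = ∫ x : E, Real.exp (-‖ceL x‖ ^ 2) := by
          refine integral_congr_ae (.of_forall fun x => ?_)
          dsimp only
          rw [hQL, hceL]
      _ = ∫ y : E, Real.exp (-‖y‖ ^ 2) ∂(Measure.map (⇑ceL) volume) :=
          (hemb.integral_map (fun y : E => Real.exp (-‖y‖ ^ 2))).symm
      _ = (ENNReal.ofReal |B.det⁻¹|).toReal • ∫ y : E, Real.exp (-‖y‖ ^ 2) := by
          rw [hmapeq, integral_smul_measure]
      _ = B.det⁻¹ * ∫ y : E, Real.exp (-‖y‖ ^ 2) := by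
          rw [ENNReal.toReal_ofReal (abs_nonneg _),
            abs_of_nonneg (inv_nonneg.2 hBdetpos.le), smul_eq_mul]
  -- polar formula for `Q` and for the norm squared
  have hpolarQ := polar_aux hd Q hQpos hQhom hQint
  have hpolar1 := polar_aux hd (fun y : E => ‖y‖ ^ 2)
    (fun x hx => pow_pos (norm_pos_iff.mpr hx) 2)
    (fun c x => by
      show ‖c • x‖ ^ 2 = c ^ 2 * ‖x‖ ^ 2
      rw [norm_smul, mul_pow, Real.norm_eq_abs, sq_abs])
    hgi
  have hG : ∫ y : E, Real.exp (-‖y‖ ^ 2) =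
      (σ Set.univ).toReal * ((1 / 2) * Real.Gamma (d / 2)) := by
    rw [hpolar1]
    congr 1
    have : ∀ Ω : Metric.sphere (0 : E) 1, (‖(Ω : E)‖ ^ 2 : ℝ) ^ (-(d : ℝ) / 2) = 1 := by
      intro Ω
      rw [mem_sphere_zero_iff_norm.mp Ω.2]
      norm_num
    rw [integral_congr_ae (.of_forall this), integral_const, smul_eq_mul, mul_one]
    rfl
  have hK : ((1 / 2) * Real.Gamma (d / 2) : ℝ) ≠ 0 := by
    have : 0 < Real.Gamma (d / 2) := Real.Gamma_pos_of_pos (by positivity)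
    positivity
  have hmain : (∫ Ω : Metric.sphere (0 : E) 1, Q (Ω : E) ^ (-(d : ℝ) / 2) ∂σ) *
      ((1 / 2) * Real.Gamma (d / 2)) =
      (B.det⁻¹ * (σ Set.univ).toReal) * ((1 / 2) * Real.Gamma (d / 2)) := by
    have h1 : (∫ Ω : Metric.sphere (0 : E) 1, Q (Ω : E) ^ (-(d : ℝ) / 2) ∂σ) *
        ((1 / 2) * Real.Gamma (d / 2)) = ∫ x : E, Real.exp (-Q x) := hpolarQ.symm
    rw [h1, hCoV, hG]
    ring
  have hfin : (∫ Ω : Metric.sphere (0 : E) 1, Q (Ω : E) ^ (-(d : ℝ) / 2) ∂σ) =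
      B.det⁻¹ * (σ Set.univ).toReal := mul_right_cancel₀ hK hmain
  have hdet : A.det ^ (-(1 : ℝ) / 2) = B.det⁻¹ := by
    rw [← hdetB2, ← Real.rpow_natCast B.det 2, ← Real.rpow_mul hBdetpos.le]
    norm_num
    exact Real.rpow_neg_one B.det
  rw [hdet]
  exact hfin

end
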